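/- Fix a real number q > 1 and δ ∈ [−1/2, 0). Then for every integer n ≥ 1: ψ_{iδ}(n) is a positive real number, and for every real α with −τ/2 < α ≤ τ/2 and α ≠ 0 one has |ψ_{α+iδ}(n)| < ψ_{iδ}(n). -/

import Mathlib

/-- `q^w = exp(w log q)`. -/
noncomputable def qpow (q : ℝ) (w : ℂ) : ℂ := Complex.exp (w * (Real.log q : ℂ))

/-- `τ = 2π / log q`. -/
noncomputable def tauq (q : ℝ) : ℝ := 2 * Real.pi / Real.log q

/-- The elementary spherical function value `φ_z(n)` on a homogeneous tree of degree
`q+1`: `φ_z(0) = 1` and for `n ≥ 1`,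
`φ_z(n) = (1/(q+1))·[q^{1-n/2}(q^{iz(n+1)} - q^{-iz(n+1)}) - q^{-n/2}(q^{iz(n-1)} - q^{-iz(n-1)})] / (q^{iz} - q^{-iz})`. -/
noncomputable def phiSph (q : ℝ) (z : ℂ) (n : ℕ) : ℂ :=
  if n = 0 then 1 else
    (1 / ((q : ℂ) + 1)) *
      ((qpow q (1 - (n : ℂ) / 2) *
          (qpow q (Complex.I * z * ((n : ℂ) + 1)) - qpow q (-(Complex.I * z) * ((n : ℂ) + 1))) -
        qpow q (-(n : ℂ) / 2) *
          (qpow q (Complex.I * z * ((n : ℂ) - 1)) - qpow q (-(Complex.I * z) * ((n : ℂ) - 1)))) /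
        (qpow q (Complex.I * z) - qpow q (-(Complex.I * z))))

/-- `B_n = 1 + ∑_{j=1}^n (q+1) q^{j-1}`, the volume of the ball of radius `n`. -/
noncomputable def ballVol (q : ℝ) (n : ℕ) : ℝ :=
  1 + ∑ j ∈ Finset.Icc 1 n, (q + 1) * q ^ (j - 1)

/-- The ball-average symbol `ψ_z(n) = (1/B_n)·(1 + ∑_{j=1}^n (q+1) q^{j-1} φ_z(j))`. -/
noncomputable def psiBall (q : ℝ) (z : ℂ) (n : ℕ) : ℂ :=
  (1 / ((ballVol q n : ℝ) : ℂ)) *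
    (1 + ∑ j ∈ Finset.Icc 1 n, (((q + 1) * q ^ (j - 1) : ℝ) : ℂ) * phiSph q z j)

open Finset

/-- coefficients of the Laurent expansion -/
noncomputable def coefC (q : ℝ) (j m : ℕ) : ℝ :=
  if m = 0 then 1 else if m = j then q ^ j else (q - 1) * q ^ (m - 1)

lemma qpow_ne_zero (q : ℝ) (w : ℂ) : qpow q w ≠ 0 := Complex.exp_ne_zero _

lemma qpow_add (q : ℝ) (a b : ℂ) : qpow q (a + b) = qpow q a * qpow q b := by
  unfold qpow; rw [add_mul, Complex.exp_add]

lemma qpow_neg (q : ℝ) (a : ℂ) : qpow q (-a) = (qpow q a)⁻¹ := by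
  unfold qpow; rw [neg_mul, Complex.exp_neg]

lemma qpow_natmul (q : ℝ) (a : ℂ) (k : ℕ) : qpow q (a * (k : ℂ)) = (qpow q a) ^ k := by
  unfold qpow; rw [mul_comm a, mul_assoc, Complex.exp_nat_mul]

lemma qpow_one (q : ℝ) (hq : 0 < q) : qpow q 1 = (q : ℂ) := by
  unfold qpow
  rw [one_mul, ← Complex.ofReal_exp, Real.exp_log hq]

lemma qpow_half_sq (q : ℝ) (hq : 0 < q) : qpow q (1/2) * qpow q (1/2) = (q : ℂ) := by
  rw [← qpow_add, show (1/2 + 1/2 : ℂ) = 1 by norm_num, qpow_one q hq]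

/-- telescoping geometric identity -/
lemma tele (a b : ℂ) : ∀ i : ℕ,
    (a - b) * ∑ k ∈ Finset.range i, a ^ (i - k) * b ^ k = a ^ (i + 1) - a * b ^ i
  | 0 => by simp
  | (i + 1) => by
    have IH := tele a b i
    rw [Finset.sum_range_succ']
    simp only [Nat.succ_sub_succ, Nat.sub_zero, pow_zero, mul_one]
    have h : ∑ k ∈ Finset.range i, a ^ (i - k) * b ^ (k + 1)
        = b * ∑ k ∈ Finset.range i, a ^ (i - k) * b ^ k := by
      rw [Finset.mul_sum]; exact Finset.sum_congr rfl fun k _ => by ring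
    rw [h]
    linear_combination b * IH

lemma Pform (q : ℝ) (hq : 1 < q) (z : ℂ)
    (hden : qpow q (Complex.I * z) - qpow q (-(Complex.I * z)) ≠ 0) (i : ℕ) :
    (((q + 1) * q ^ i : ℝ) : ℂ) * phiSph q z (i + 1)
      = ∑ m ∈ Finset.range (i + 2), ((coefC q (i + 1) m : ℝ) : ℂ) *
          (qpow q (1/2 + Complex.I * z)) ^ (((i : ℤ) + 1) - 2 * (m : ℤ)) := by
  have hq0 : (0:ℝ) < q := lt_trans one_pos hq
  set σ : ℂ := qpow q (1/2) with hσdef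
  set t : ℂ := qpow q (Complex.I * z) with htdef
  have hσ0 : σ ≠ 0 := qpow_ne_zero _ _
  have ht0 : t ≠ 0 := qpow_ne_zero _ _
  have hq2 : σ * σ = (q : ℂ) := qpow_half_sq q hq0
  have hu : qpow q (-(Complex.I * z)) = t⁻¹ := qpow_neg _ _
  rw [hu] at hden
  -- w and its inverse
  have hw : qpow q (1/2 + Complex.I * z) = σ * t := qpow_add _ _ _
  have hwinv : (σ * t)⁻¹ = σ⁻¹ * t⁻¹ := by rw [mul_inv]
  have hw0 : σ * t ≠ 0 := mul_ne_zero hσ0 ht0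
  -- rewrite RHS terms into nat powers
  have hterm : ∀ m ∈ Finset.range (i + 2),
      ((coefC q (i + 1) m : ℝ) : ℂ) * (qpow q (1/2 + Complex.I * z)) ^ (((i : ℤ) + 1) - 2 * (m : ℤ))
      = ((coefC q (i + 1) m : ℝ) : ℂ) * ((σ * t) ^ (i + 1 - m) * (σ⁻¹ * t⁻¹) ^ m) := by
    intro m hm
    rw [Finset.mem_range] at hm
    have hm' : m ≤ i + 1 := by omega
    have he : ((i : ℤ) + 1) - 2 * (m : ℤ) = ((i + 1 - m : ℕ) : ℤ) - (m : ℤ) := by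
      push_cast [Nat.cast_sub hm']; ring
    rw [hw, he, zpow_sub₀ hw0, zpow_natCast, zpow_natCast, div_eq_mul_inv, ← inv_pow, hwinv]
  rw [Finset.sum_congr rfl hterm]
  -- split the sum
  have hsplit : Finset.range (i + 2) = insert 0 (insert (i + 1) (Finset.Ico 1 (i + 1))) := by
    ext x; simp [Finset.mem_Ico]; omega
  rw [hsplit, Finset.sum_insert (by simp), Finset.sum_insert (by simp)]
  -- evaluate endpoint coefficients
  have hc0 : coefC q (i + 1) 0 = 1 := by simp [coefC]
  have hcn : coefC q (i + 1) (i + 1) = q ^ (i + 1) := by simp [coefC]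
  rw [hc0, hcn]
  -- the middle sum
  have hmid : ∑ m ∈ Finset.Ico 1 (i + 1), ((coefC q (i + 1) m : ℝ) : ℂ) *
        ((σ * t) ^ (i + 1 - m) * (σ⁻¹ * t⁻¹) ^ m)
      = (((q : ℂ) - 1) * (σ⁻¹ * t⁻¹)) *
          ∑ k ∈ Finset.range i, (σ * t) ^ (i - k) * (σ * t⁻¹) ^ k := by
    rw [Finset.sum_Ico_eq_sum_range]
    simp only [Nat.add_sub_cancel]
    rw [Finset.mul_sum]
    apply Finset.sum_congr rfl
    intro k hk
    rw [Finset.mem_range] at hk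
    have hne1 : 1 + k ≠ 0 := by omega
    have hne2 : 1 + k ≠ i + 1 := by omega
    have hco : coefC q (i + 1) (1 + k) = (q - 1) * q ^ k := by
      unfold coefC
      rw [if_neg hne1, if_neg hne2, show 1 + k - 1 = k by omega]
    rw [hco]
    have hsub : i + 1 - (1 + k) = i - k := by omega
    rw [hsub]
    have hb : (q : ℂ) * (σ⁻¹ * t⁻¹) = σ * t⁻¹ := by
      rw [← hq2]; field_simp
    have hk2 : ((q : ℂ)) ^ k * (σ⁻¹ * t⁻¹) ^ k = (σ * t⁻¹) ^ k := by
      rw [← mul_pow, hb]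
    push_cast
    linear_combination (((q : ℂ) - 1) * (σ * t) ^ (i - k) * (σ⁻¹ * t⁻¹)) * hk2
  rw [hmid]
  -- closed form for the geometric sum
  have Htele := tele (σ * t) (σ * t⁻¹) i
  have hinv : t * t⁻¹ = 1 := mul_inv_cancel₀ ht0
  have hti : (t⁻¹) ^ i * t ^ i = 1 := by rw [← mul_pow, inv_mul_cancel₀ ht0, one_pow]
  set S := ∑ k ∈ Finset.range i, (σ * t) ^ (i - k) * (σ * t⁻¹) ^ k with hSdef
  have Htele2 : σ * t ^ (i + 2) * S - σ * t ^ i * S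
      = σ ^ (i + 1) * t ^ (2 * i + 2) - σ ^ (i + 1) * t ^ 2 := by
    linear_combination t ^ (i + 1) * Htele + (σ * S * t ^ i) * hinv - σ ^ (i + 1) * t ^ 2 * hti
  -- unfold phiSph and rewrite qpow's
  rw [phiSph, if_neg (Nat.succ_ne_zero i)]
  have e1 : qpow q (1 - ((i + 1 : ℕ) : ℂ) / 2) = (q : ℂ) * (σ⁻¹) ^ (i + 1) := by
    have h : (1 - ((i + 1 : ℕ) : ℂ) / 2) = 1 + (-(1/2) : ℂ) * ((i + 1 : ℕ) : ℂ) := by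
      push_cast; ring
    rw [h, qpow_add, qpow_one q hq0, qpow_natmul, qpow_neg]
  have e2 : qpow q (-((i + 1 : ℕ) : ℂ) / 2) = (σ⁻¹) ^ (i + 1) := by
    have h : (-((i + 1 : ℕ) : ℂ) / 2) = (-(1/2) : ℂ) * ((i + 1 : ℕ) : ℂ) := by ring
    rw [h, qpow_natmul, qpow_neg]
  have e3 : qpow q (Complex.I * z * (((i + 1 : ℕ) : ℂ) + 1)) = t ^ (i + 2) := by
    have h : Complex.I * z * (((i + 1 : ℕ) : ℂ) + 1) = (Complex.I * z) * ((i + 2 : ℕ) : ℂ) := by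
      push_cast; ring
    rw [h, qpow_natmul]
  have e4 : qpow q (-(Complex.I * z) * (((i + 1 : ℕ) : ℂ) + 1)) = (t⁻¹) ^ (i + 2) := by
    have h : -(Complex.I * z) * (((i + 1 : ℕ) : ℂ) + 1) = (-(Complex.I * z)) * ((i + 2 : ℕ) : ℂ) := by
      push_cast; ring
    rw [h, qpow_natmul, qpow_neg]
  have e5 : qpow q (Complex.I * z * (((i + 1 : ℕ) : ℂ) - 1)) = t ^ i := by
    have h : Complex.I * z * (((i + 1 : ℕ) : ℂ) - 1) = (Complex.I * z) * ((i : ℕ) : ℂ) := by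
      push_cast; ring
    rw [h, qpow_natmul]
  have e6 : qpow q (-(Complex.I * z) * (((i + 1 : ℕ) : ℂ) - 1)) = (t⁻¹) ^ i := by
    have h : -(Complex.I * z) * (((i + 1 : ℕ) : ℂ) - 1) = (-(Complex.I * z)) * ((i : ℕ) : ℂ) := by
      push_cast; ring
    rw [h, qpow_natmul, qpow_neg]
  rw [e1, e2, e3, e4, e5, e6, hu]
  have hq1 : (q : ℂ) + 1 ≠ 0 := by
    intro h
    have h2 : ((q + 1 : ℝ) : ℂ) = 0 := by push_cast; exact h
    have h3 : (q + 1 : ℝ) = 0 := by exact_mod_cast h2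
    linarith
  push_cast
  rw [← hq2]
  have hq1' : σ * σ + 1 ≠ 0 := by rw [hq2]; exact hq1
  have hd1 : (t - t⁻¹) * (t - t⁻¹)⁻¹ = 1 := mul_inv_cancel₀ hden
  have hqinv : (σ * σ + 1) * (σ * σ + 1)⁻¹ = 1 := mul_inv_cancel₀ hq1'
  have hσ1 : σ * σ⁻¹ = 1 := mul_inv_cancel₀ hσ0
  have hσi : σ ^ (i + 1) * (σ⁻¹) ^ (i + 1) = 1 := by rw [← mul_pow, hσ1, one_pow]
  have hti2 : t ^ (i + 2) * (t⁻¹) ^ (i + 2) = 1 := by rw [← mul_pow, hinv, one_pow]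
  have HX : σ * ((t - t⁻¹) * (σ⁻¹ * t⁻¹ * S)) = σ ^ i * t ^ i - σ ^ i * (t⁻¹) ^ i := by
    have H := tele (σ * t) (σ * t⁻¹) i
    have hσii : σ ^ i * (σ⁻¹) ^ i = 1 := by rw [← mul_pow, hσ1, one_pow]
    have htii : t ^ i * (t⁻¹) ^ i = 1 := by rw [← mul_pow, hinv, one_pow]
    have hστ : σ * σ⁻¹ * (t * t⁻¹) = 1 := by rw [hσ1, hinv, mul_one]
    linear_combination (norm := ring_nf) (σ⁻¹ * t⁻¹) * Htele
      + (σ ^ i * t ^ i - σ ^ i * (t⁻¹) ^ i) * hστ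
  rw [← htdef]
  simp only [Nat.sub_self, pow_zero]
  have cancel1 : ∀ N : ℂ, (σ * σ + 1) * (σ * σ) ^ i * (1 / (σ * σ + 1) * N)
      = (σ * σ) ^ i * N := by
    intro N; rw [one_div]; linear_combination ((σ * σ) ^ i * N) * hqinv
  rw [cancel1, mul_div_assoc', div_eq_iff hden]
  simp only [inv_pow, mul_pow]
  field_simp
  linear_combination (norm := ring_nf) ((1 - σ ^ 2) * σ ^ i * t ^ 3 * t ^ (2 * i)) * Htele2

/-- the index set -/
def sigBall (n : ℕ) : Finset ((_ : ℕ) × ℕ) :=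
  (Finset.range (n + 1)).sigma (fun j => Finset.range (j + 1))

lemma Ssum (q : ℝ) (hq : 1 < q) (z : ℂ)
    (hden : qpow q (Complex.I * z) - qpow q (-(Complex.I * z)) ≠ 0) (n : ℕ) :
    1 + ∑ j ∈ Finset.Icc 1 n, (((q + 1) * q ^ (j - 1) : ℝ) : ℂ) * phiSph q z j
    = ∑ p ∈ sigBall n, ((coefC q p.1 p.2 : ℝ) : ℂ) *
        (qpow q (1/2 + Complex.I * z)) ^ ((p.1 : ℤ) - 2 * (p.2 : ℤ)) := by
  rw [sigBall, Finset.sum_sigma, Finset.sum_range_succ']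
  have h0 : ∑ m ∈ Finset.range (0 + 1), ((coefC q 0 m : ℝ) : ℂ) *
      (qpow q (1/2 + Complex.I * z)) ^ (((0:ℕ) : ℤ) - 2 * (m : ℤ)) = 1 := by
    simp [coefC]
  rw [h0]
  rw [show Finset.Icc 1 n = Finset.Ico 1 (n + 1) by rfl, Finset.sum_Ico_eq_sum_range]
  simp only [Nat.add_sub_cancel]
  rw [add_comm]
  congr 1
  apply Finset.sum_congr rfl
  intro k _
  have hP := Pform q hq z hden k
  have h1 : (1 + k - 1) = k := by omega
  rw [h1]
  have h2 : (((q + 1) * q ^ k : ℝ) : ℂ) * phiSph q z (1 + k)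
      = (((q + 1) * q ^ k : ℝ) : ℂ) * phiSph q z (k + 1) := by rw [Nat.add_comm 1 k]
  rw [h2, hP]
  apply Finset.sum_congr rfl
  intro m _
  norm_cast

lemma abs_sum_lt {ι : Type*} [DecidableEq ι] (s : Finset ι) (f : ι → ℂ) (a b : ι)
    (ha : a ∈ s) (hb : b ∈ s) (hab : a ≠ b) (h : ¬ SameRay ℝ (f a) (f b)) :
    ‖∑ i ∈ s, f i‖ < ∑ i ∈ s, ‖f i‖ := by
  have hb' : b ∈ s.erase a := Finset.mem_erase.mpr ⟨fun hh => hab hh.symm, hb⟩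
  rw [← Finset.add_sum_erase _ f ha, ← Finset.add_sum_erase _ f hb',
    ← Finset.add_sum_erase _ (fun i => ‖f i‖) ha,
    ← Finset.add_sum_erase _ (fun i => ‖f i‖) hb']
  have h1 : ‖f a + f b‖ < ‖f a‖ + ‖f b‖ := by
    have := (not_sameRay_iff_norm_add_lt (x := f a) (y := f b)).mp h
    simpa using this
  have h2 : ‖∑ i ∈ (s.erase a).erase b, f i‖
      ≤ ∑ i ∈ (s.erase a).erase b, ‖f i‖ := by
    simpa using norm_sum_le ((s.erase a).erase b) f
  calc ‖f a + (f b + ∑ i ∈ (s.erase a).erase b, f i)‖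
      ≤ ‖f a + f b‖ + ‖∑ i ∈ (s.erase a).erase b, f i‖ := by
        rw [← add_assoc]; exact norm_add_le _ _
    _ < ‖f a‖ + (‖f b‖ + ∑ i ∈ (s.erase a).erase b, ‖f i‖) := by
        linarith

lemma den_ne (q : ℝ) (hq : 1 < q) (z : ℂ) (him : z.im < 0) :
    qpow q (Complex.I * z) - qpow q (-(Complex.I * z)) ≠ 0 := by
  have hL : 0 < Real.log q := Real.log_pos hq
  have hre : (Complex.I * z * ((Real.log q : ℝ) : ℂ)).re = -z.im * Real.log q := by
    simp [Complex.mul_re, Complex.mul_im]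
  have habs : 1 < ‖qpow q (Complex.I * z)‖ := by
    rw [qpow, Complex.norm_exp, hre]
    calc (1:ℝ) = Real.exp 0 := Real.exp_zero.symm
      _ < Real.exp (-z.im * Real.log q) := by
          apply Real.exp_lt_exp.mpr; nlinarith
  rw [qpow_neg]
  intro h
  have ht := sub_eq_zero.mp h
  have h2 : ‖qpow q (Complex.I * z)‖ =
      (‖qpow q (Complex.I * z)‖)⁻¹ := by
    conv_lhs => rw [ht]
    exact norm_inv _
  have h3 : (‖qpow q (Complex.I * z)‖)⁻¹ < 1 := inv_lt_one_of_one_lt₀ habs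
  linarith

lemma abs_w (q : ℝ) (z : ℂ) :
    ‖qpow q (1/2 + Complex.I * z)‖
      = Real.exp ((1/2 - z.im) * Real.log q) := by
  rw [qpow, Complex.norm_exp]
  congr 1
  rw [Complex.mul_re]
  simp only [Complex.ofReal_re, Complex.ofReal_im, mul_zero, sub_zero]
  have h : ((1/2 : ℂ) + Complex.I * z).re = 1/2 - z.im := by
    simp [Complex.add_re, Complex.mul_re]
    ring
  rw [h]

lemma w_real (q : ℝ) (δ : ℝ) :
    qpow q (1/2 + Complex.I * (Complex.I * (δ : ℂ)))
      = ((Real.exp ((1/2 - δ) * Real.log q) : ℝ) : ℂ) := by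
  have hzz : (1/2 + Complex.I * (Complex.I * (δ : ℂ))) = (((1/2 - δ : ℝ)) : ℂ) := by
    push_cast
    linear_combination (δ : ℂ) * Complex.I_sq
  rw [hzz, qpow, ← Complex.ofReal_mul, ← Complex.ofReal_exp]

lemma coefC_pos (q : ℝ) (hq : 1 < q) (j m : ℕ) : 0 < coefC q j m := by
  have h1 : 0 < q := by linarith
  have h2 : 0 < q - 1 := by linarith
  unfold coefC
  split_ifs
  · norm_num
  · positivity
  · positivity

lemma not_ray (q : ℝ) (hq : 1 < q) (α δ' : ℝ) (hα1 : -(tauq q)/2 < α)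
    (hα2 : α ≤ tauq q / 2) (hα0 : α ≠ 0) :
    ¬ SameRay ℝ (1 : ℂ) (qpow q (1/2 + Complex.I * ((α : ℂ) + Complex.I * (δ' : ℂ)))) := by
  intro hray
  obtain ⟨r, hr0, hrw⟩ := hray.exists_nonneg_left one_ne_zero
  rw [Complex.real_smul, mul_one] at hrw
  have hL : 0 < Real.log q := Real.log_pos hq
  have hx : (1/2 + Complex.I * ((α : ℂ) + Complex.I * (δ' : ℂ))) * ((Real.log q : ℝ) : ℂ)
      = Complex.ofReal ((1/2 - δ') * Real.log q) + Complex.ofReal (α * Real.log q) * Complex.I := by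
    push_cast
    linear_combination ((δ' : ℂ) * ((Real.log q : ℝ) : ℂ)) * Complex.I_sq
  have him : (qpow q (1/2 + Complex.I * ((α : ℂ) + Complex.I * (δ' : ℂ)))).im
      = Real.exp ((1/2 - δ') * Real.log q) * Real.sin (α * Real.log q) := by
    rw [qpow, hx, Complex.exp_im]
    simp
  have hre : (qpow q (1/2 + Complex.I * ((α : ℂ) + Complex.I * (δ' : ℂ)))).re
      = Real.exp ((1/2 - δ') * Real.log q) * Real.cos (α * Real.log q) := by
    rw [qpow, hx, Complex.exp_re]
    simp
  have him0 : (qpow q (1/2 + Complex.I * ((α : ℂ) + Complex.I * (δ' : ℂ)))).im = 0 := by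
    rw [← hrw]; simp
  have hsin : Real.sin (α * Real.log q) = 0 := by
    rw [him] at him0
    have := Real.exp_pos ((1/2 - δ') * Real.log q)
    rcases mul_eq_zero.mp him0 with h | h
    · linarith
    · exact h
  have hθ1 : -Real.pi < α * Real.log q := by
    rw [tauq] at hα1
    have h0 : -(2 * Real.pi / Real.log q) / 2 = -Real.pi / Real.log q := by ring
    rw [h0] at hα1
    have := (div_lt_iff₀ hL).mp hα1
    linarith
  have hθ2 : α * Real.log q ≤ Real.pi := by
    rw [tauq] at hα2
    have h0 : 2 * Real.pi / Real.log q / 2 = Real.pi / Real.log q := by ring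
    rw [h0] at hα2
    have := (le_div_iff₀ hL).mp hα2
    linarith
  rcases lt_or_eq_of_le hθ2 with hlt | heq
  · exact (mul_ne_zero hα0 (ne_of_gt hL))
      ((Real.sin_eq_zero_iff_of_lt_of_lt hθ1 hlt).mp hsin)
  · have hre0 : (qpow q (1/2 + Complex.I * ((α : ℂ) + Complex.I * (δ' : ℂ)))).re = r := by
      rw [← hrw]; simp
    rw [heq, Real.cos_pi] at hre
    have := Real.exp_pos ((1/2 - δ') * Real.log q)
    rw [hre0] at hre
    nlinarith

/-- For `δ ∈ [-1/2, 0)` and every `n ≥ 1`: `ψ_{iδ}(n)` is a positive real and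
`|ψ_{α+iδ}(n)| < ψ_{iδ}(n)` for real `α ∈ (-τ/2, τ/2] \ {0}`. -/
theorem stmt11 (q : ℝ) (hq : 1 < q) (δ : ℝ) (hδ : δ ∈ Set.Ico (-(1/2) : ℝ) 0)
    (n : ℕ) (hn : 1 ≤ n) :
    ((psiBall q (Complex.I * (δ : ℂ)) n).im = 0 ∧
      0 < (psiBall q (Complex.I * (δ : ℂ)) n).re) ∧
    ∀ α : ℝ, -(tauq q) / 2 < α → α ≤ tauq q / 2 → α ≠ 0 →
      ‖psiBall q ((α : ℂ) + Complex.I * (δ : ℂ)) n‖ <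
        (psiBall q (Complex.I * (δ : ℂ)) n).re := by
  obtain ⟨hδ1, hδ2⟩ := hδ
  have hq0 : (0:ℝ) < q := by linarith
  have hL : 0 < Real.log q := Real.log_pos hq
  set W : ℝ := Real.exp ((1/2 - δ) * Real.log q) with hWdef
  have hW : 0 < W := Real.exp_pos _
  have hB : 0 < ballVol q n := by
    rw [ballVol]
    have h1 : ∀ j ∈ Finset.Icc 1 n, (0:ℝ) ≤ (q + 1) * q ^ (j - 1) := by
      intro j _; positivity
    have := Finset.sum_nonneg h1
    linarith
  have hden0 : qpow q (Complex.I * (Complex.I * (δ:ℂ)))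
      - qpow q (-(Complex.I * (Complex.I * (δ:ℂ)))) ≠ 0 :=
    den_ne q hq _ (by simpa using hδ2)
  have hS0 := Ssum q hq (Complex.I * (δ:ℂ)) hden0 n
  rw [w_real q δ] at hS0
  set R : ℝ := ∑ p ∈ sigBall n, coefC q p.1 p.2 * W ^ ((p.1 : ℤ) - 2 * (p.2 : ℤ)) with hRdef
  have hS0R : (1 : ℂ) + ∑ j ∈ Finset.Icc 1 n, (((q + 1) * q ^ (j - 1) : ℝ) : ℂ) *
      phiSph q (Complex.I * (δ:ℂ)) j = ((R : ℝ) : ℂ) := by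
    rw [hS0, hRdef]
    simp only [hWdef]
    push_cast [Complex.ofReal_zpow]
    rfl
  have hpsi0 : psiBall q (Complex.I * (δ:ℂ)) n = (((1 / ballVol q n) * R : ℝ) : ℂ) := by
    rw [psiBall, hS0R]; push_cast; ring
  have hR0 : 0 < R := by
    rw [hRdef]
    apply Finset.sum_pos
    · intro p _
      exact mul_pos (coefC_pos q hq _ _) (zpow_pos hW _)
    · exact ⟨⟨0, 0⟩, by simp [sigBall]⟩
  have hre0 : (psiBall q (Complex.I * (δ:ℂ)) n).re = (1 / ballVol q n) * R := by
    rw [hpsi0, Complex.ofReal_re]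
  refine ⟨⟨by rw [hpsi0]; simp, by rw [hre0]; positivity⟩, ?_⟩
  intro α hα1 hα2 hα0
  set z : ℂ := (α : ℂ) + Complex.I * (δ : ℂ) with hzdef
  have hdenα : qpow q (Complex.I * z) - qpow q (-(Complex.I * z)) ≠ 0 :=
    den_ne q hq _ (by simp [hzdef, hδ2])
  have hSα := Ssum q hq z hdenα n
  have hpsiα : psiBall q z n
      = (1 / ((ballVol q n : ℝ) : ℂ)) * ∑ p ∈ sigBall n, ((coefC q p.1 p.2 : ℝ) : ℂ) *
          (qpow q (1/2 + Complex.I * z)) ^ ((p.1 : ℤ) - 2 * (p.2 : ℤ)) := by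
    rw [psiBall, hSα]
  rw [hpsiα, hre0, norm_mul]
  have habs1 : ‖1 / ((ballVol q n : ℝ) : ℂ)‖ = 1 / ballVol q n := by
    rw [norm_div, norm_one, Complex.norm_real, Real.norm_eq_abs, abs_of_pos hB]
  rw [habs1]
  have hzim : z.im = δ := by simp [hzdef]
  have hwabs : ‖qpow q (1/2 + Complex.I * z)‖ = W := by
    rw [abs_w, hzim, hWdef]
  -- termwise absolute values
  have hterm : ∀ p ∈ sigBall n,
      ‖((coefC q p.1 p.2 : ℝ) : ℂ) *
        (qpow q (1/2 + Complex.I * z)) ^ ((p.1 : ℤ) - 2 * (p.2 : ℤ))‖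
      = coefC q p.1 p.2 * W ^ ((p.1 : ℤ) - 2 * (p.2 : ℤ)) := by
    intro p _
    rw [norm_mul, norm_zpow, hwabs, Complex.norm_real, Real.norm_eq_abs,
      abs_of_pos (coefC_pos q hq _ _)]
  have hRabs : R = ∑ p ∈ sigBall n,
      ‖((coefC q p.1 p.2 : ℝ) : ℂ) *
        (qpow q (1/2 + Complex.I * z)) ^ ((p.1 : ℤ) - 2 * (p.2 : ℤ))‖ := by
    rw [hRdef]
    exact (Finset.sum_congr rfl hterm).symm
  have hlt : ‖∑ p ∈ sigBall n, ((coefC q p.1 p.2 : ℝ) : ℂ) *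
      (qpow q (1/2 + Complex.I * z)) ^ ((p.1 : ℤ) - 2 * (p.2 : ℤ))‖ < R := by
    rw [hRabs]
    apply abs_sum_lt (sigBall n) _ ⟨0, 0⟩ ⟨1, 0⟩
    · simp [sigBall]
    · simp [sigBall]; omega
    · simp
    · have hf0 : ((coefC q (0:ℕ) (0:ℕ) : ℝ) : ℂ) *
          (qpow q (1/2 + Complex.I * z)) ^ (((0:ℕ) : ℤ) - 2 * ((0:ℕ) : ℤ)) = 1 := by
        simp [coefC]
      have hf1 : ((coefC q (1:ℕ) (0:ℕ) : ℝ) : ℂ) *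
          (qpow q (1/2 + Complex.I * z)) ^ (((1:ℕ) : ℤ) - 2 * ((0:ℕ) : ℤ)) =
          qpow q (1/2 + Complex.I * z) := by
        simp [coefC]
      rw [hf0, hf1]
      exact not_ray q hq α δ hα1 hα2 hα0
  have hBpos : (0:ℝ) < 1 / ballVol q n := by positivity
  calc (1 / ballVol q n) * ‖∑ p ∈ sigBall n, ((coefC q p.1 p.2 : ℝ) : ℂ) *
        (qpow q (1/2 + Complex.I * z)) ^ ((p.1 : ℤ) - 2 * (p.2 : ℤ))‖
      < (1 / ballVol q n) * R := by
        exact mul_lt_mul_of_pos_left hlt hBpos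
    _ = (1 / ballVol q n) * R := rfl
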